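/- For any tripartite quantum state ρ_{ABC} on a tensor product of finite-dimensional Hilbert spaces, 1 + tr(ρ_{BC}²) − tr(ρ_{AB}²) − tr(ρ_{AC}²) ≥ 0. -/

import Mathlib

open Matrix
open scoped ComplexOrder

variable {a b c : ℕ}

/-- Two-body reduced state on `AB`. -/
noncomputable def rAB (ρ : Matrix (Fin a × Fin b × Fin c) (Fin a × Fin b × Fin c) ℂ) :
    Matrix (Fin a × Fin b) (Fin a × Fin b) ℂ :=
  Matrix.of fun x y => ∑ z : Fin c, ρ (x.1, x.2, z) (y.1, y.2, z)

/-- Two-body reduced state on `AC`. -/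
noncomputable def rAC (ρ : Matrix (Fin a × Fin b × Fin c) (Fin a × Fin b × Fin c) ℂ) :
    Matrix (Fin a × Fin c) (Fin a × Fin c) ℂ :=
  Matrix.of fun x y => ∑ z : Fin b, ρ (x.1, z, x.2) (y.1, z, y.2)

/-- Two-body reduced state on `BC`. -/
noncomputable def rBC (ρ : Matrix (Fin a × Fin b × Fin c) (Fin a × Fin b × Fin c) ℂ) :
    Matrix (Fin b × Fin c) (Fin b × Fin c) ℂ :=
  Matrix.of fun x y => ∑ z : Fin a, ρ (z, x.1, x.2) (z, y.1, y.2)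

section PermMatrix

open Kronecker

variable {ι : Type*} [Fintype ι] [DecidableEq ι]

/-- Permutation matrix of an equivalence. -/
def Pm (e : ι ≃ ι) : Matrix ι ι ℂ := Matrix.of fun x y => if y = e x then 1 else 0

lemma Pm_mul (e f : ι ≃ ι) : Pm e * Pm f = Pm (e.trans f) := by
  ext x y
  simp only [Pm, Matrix.mul_apply, Matrix.of_apply, Equiv.trans_apply]
  rw [Finset.sum_eq_single (e x)] <;> simp +contextual <;> congr

set_option linter.unusedSectionVars false in
lemma Pm_refl : Pm (Equiv.refl ι) = 1 := by
  ext x y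
  simp [Pm, Matrix.one_apply, eq_comm]

set_option linter.unusedSectionVars false in
lemma Pm_conjTranspose (e : ι ≃ ι) : (Pm e)ᴴ = Pm e.symm := by
  ext x y
  simp only [Pm, Matrix.conjTranspose_apply, Matrix.of_apply]
  have h : (x = e y) ↔ (y = e.symm x) := by
    constructor
    · rintro rfl; simp
    · rintro rfl; simp
  split_ifs with h1 h2 h2
  · exact star_one ℂ
  · exact absurd (h.mp h1) h2
  · exact absurd (h.mpr h2) h1
  · exact star_zero ℂ

lemma trace_mul_Pm (R : Matrix ι ι ℂ) (e : ι ≃ ι) :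
    (R * Pm e).trace = ∑ x, R x (e.symm x) := by
  simp only [Matrix.trace, Matrix.diag, Matrix.mul_apply, Pm, Matrix.of_apply]
  refine Finset.sum_congr rfl fun x _ => ?_
  rw [Finset.sum_eq_single (e.symm x)]
  · simp
  · intro y _ hy
    have : x ≠ e y := fun h => hy (by rw [h, Equiv.symm_apply_apply])
    simp [this]
  · simp

lemma psd_trace_nonneg {M : Matrix ι ι ℂ} (h : M.PosSemidef) : 0 ≤ M.trace := by
  refine Finset.sum_nonneg fun i _ => ?_
  exact h.diag_nonneg

end PermMatrix

section Tri

open Kronecker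

/-- Swap of the `A` and `B` components between the two copies. -/
def eAB : ((Fin a × Fin b × Fin c) × (Fin a × Fin b × Fin c)) ≃
    ((Fin a × Fin b × Fin c) × (Fin a × Fin b × Fin c)) :=
  ⟨fun x => ((x.2.1, x.2.2.1, x.1.2.2), (x.1.1, x.1.2.1, x.2.2.2)),
   fun x => ((x.2.1, x.2.2.1, x.1.2.2), (x.1.1, x.1.2.1, x.2.2.2)),
   fun _ => rfl, fun _ => rfl⟩

/-- Swap of the `A` and `C` components between the two copies. -/
def eAC : ((Fin a × Fin b × Fin c) × (Fin a × Fin b × Fin c)) ≃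
    ((Fin a × Fin b × Fin c) × (Fin a × Fin b × Fin c)) :=
  ⟨fun x => ((x.2.1, x.1.2.1, x.2.2.2), (x.1.1, x.2.2.1, x.1.2.2)),
   fun x => ((x.2.1, x.1.2.1, x.2.2.2), (x.1.1, x.2.2.1, x.1.2.2)),
   fun _ => rfl, fun _ => rfl⟩

/-- Swap of the `B` and `C` components between the two copies. -/
def eBC : ((Fin a × Fin b × Fin c) × (Fin a × Fin b × Fin c)) ≃
    ((Fin a × Fin b × Fin c) × (Fin a × Fin b × Fin c)) :=
  ⟨fun x => ((x.1.1, x.2.2.1, x.2.2.2), (x.2.1, x.1.2.1, x.1.2.2)),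
   fun x => ((x.1.1, x.2.2.1, x.2.2.2), (x.2.1, x.1.2.1, x.1.2.2)),
   fun _ => rfl, fun _ => rfl⟩

/-- Reindexing for the `AB` trace identity. -/
def EAB : ((Fin a × Fin b) × (Fin a × Fin b) × Fin c × Fin c) ≃
    ((Fin a × Fin b × Fin c) × (Fin a × Fin b × Fin c)) :=
  ⟨fun y => ((y.1.1, y.1.2, y.2.2.1), (y.2.1.1, y.2.1.2, y.2.2.2)),
   fun x => ((x.1.1, x.1.2.1), (x.2.1, x.2.2.1), (x.1.2.2, x.2.2.2)),
   fun _ => rfl, fun _ => rfl⟩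

/-- Reindexing for the `AC` trace identity. -/
def EAC : ((Fin a × Fin c) × (Fin a × Fin c) × Fin b × Fin b) ≃
    ((Fin a × Fin b × Fin c) × (Fin a × Fin b × Fin c)) :=
  ⟨fun y => ((y.1.1, y.2.2.1, y.1.2), (y.2.1.1, y.2.2.2, y.2.1.2)),
   fun x => ((x.1.1, x.1.2.2), (x.2.1, x.2.2.2), (x.1.2.1, x.2.2.1)),
   fun _ => rfl, fun _ => rfl⟩

/-- Reindexing for the `BC` trace identity. -/
def EBC : ((Fin b × Fin c) × (Fin b × Fin c) × Fin a × Fin a) ≃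
    ((Fin a × Fin b × Fin c) × (Fin a × Fin b × Fin c)) :=
  ⟨fun y => ((y.2.2.1, y.1.1, y.1.2), (y.2.2.2, y.2.1.1, y.2.1.2)),
   fun x => ((x.1.2.1, x.1.2.2), (x.2.2.1, x.2.2.2), (x.1.1, x.2.1)),
   fun _ => rfl, fun _ => rfl⟩

lemma sumAB (ρ : Matrix (Fin a × Fin b × Fin c) (Fin a × Fin b × Fin c) ℂ) :
    ∑ x : (Fin a × Fin b × Fin c) × (Fin a × Fin b × Fin c),
      (ρ ⊗ₖ ρ) x (eAB x) = (rAB ρ ^ 2).trace := by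
  rw [pow_two]
  simp only [Matrix.trace, Matrix.diag, Matrix.mul_apply, rAB, Matrix.of_apply]
  rw [← Equiv.sum_comp (EAB (a := a) (b := b) (c := c))]
  simp only [Fintype.sum_prod_type, kroneckerMap_apply, EAB, eAB, Equiv.coe_fn_mk,
    Finset.sum_mul_sum]

lemma sumAC (ρ : Matrix (Fin a × Fin b × Fin c) (Fin a × Fin b × Fin c) ℂ) :
    ∑ x : (Fin a × Fin b × Fin c) × (Fin a × Fin b × Fin c),
      (ρ ⊗ₖ ρ) x (eAC x) = (rAC ρ ^ 2).trace := by
  rw [pow_two]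
  simp only [Matrix.trace, Matrix.diag, Matrix.mul_apply, rAC, Matrix.of_apply]
  rw [← Equiv.sum_comp (EAC (a := a) (b := b) (c := c))]
  simp only [Fintype.sum_prod_type, kroneckerMap_apply, EAC, eAC, Equiv.coe_fn_mk,
    Finset.sum_mul_sum]

lemma sumBC (ρ : Matrix (Fin a × Fin b × Fin c) (Fin a × Fin b × Fin c) ℂ) :
    ∑ x : (Fin a × Fin b × Fin c) × (Fin a × Fin b × Fin c),
      (ρ ⊗ₖ ρ) x (eBC x) = (rBC ρ ^ 2).trace := by
  rw [pow_two]
  simp only [Matrix.trace, Matrix.diag, Matrix.mul_apply, rBC, Matrix.of_apply]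
  rw [← Equiv.sum_comp (EBC (a := a) (b := b) (c := c))]
  simp only [Fintype.sum_prod_type, kroneckerMap_apply, EBC, eBC, Equiv.coe_fn_mk,
    Finset.sum_mul_sum]

end Tri

/-- For any tripartite quantum state `ρ_{ABC}` on a tensor product of finite-dimensional
Hilbert spaces, `1 + tr(ρ_{BC}²) − tr(ρ_{AB}²) − tr(ρ_{AC}²) ≥ 0`. -/
theorem purity_inequality (a b c : ℕ)
    (ρ : Matrix (Fin a × Fin b × Fin c) (Fin a × Fin b × Fin c) ℂ)
    (hρ : ρ.PosSemidef) (htr : ρ.trace = 1) :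
    0 ≤ 1 + (rBC ρ ^ 2).trace - (rAB ρ ^ 2).trace - (rAC ρ ^ 2).trace := by
  classical
  open Kronecker in
  set ι := (Fin a × Fin b × Fin c) × (Fin a × Fin b × Fin c)
  set R : Matrix ι ι ℂ := ρ ⊗ₖ ρ with hRdef
  -- R is positive semidefinite
  have hR : R.PosSemidef := by
    obtain ⟨B, hB⟩ : ∃ B : Matrix (Fin a × Fin b × Fin c) (Fin a × Fin b × Fin c) ℂ,
        ρ = Bᴴ * B := by
      open scoped MatrixOrder in
      exact CStarAlgebra.nonneg_iff_eq_star_mul_self.mp hρ.nonneg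
    have hconj : (B ⊗ₖ B)ᴴ = Bᴴ ⊗ₖ Bᴴ := by
      ext x y
      simp [Matrix.conjTranspose_apply, Matrix.kroneckerMap_apply, star_mul']
    have : R = (B ⊗ₖ B)ᴴ * (B ⊗ₖ B) := by
      rw [hconj, ← Matrix.mul_kronecker_mul, hRdef, hB]
    rw [this]
    exact Matrix.posSemidef_conjTranspose_mul_self _
  set P : Matrix ι ι ℂ := Pm eAB with hPdef
  set Q : Matrix ι ι ℂ := Pm eAC with hQdef
  set S : Matrix ι ι ℂ := Pm eBC with hSdef
  set T : Matrix ι ι ℂ := 1 - P - Q + S with hTdef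
  -- group relations
  have hP2 : P * P = 1 := by
    rw [hPdef, Pm_mul]
    rw [show (eAB : ι ≃ ι).trans eAB = Equiv.refl ι from Equiv.ext fun _ => rfl, Pm_refl]
  have hQ2 : Q * Q = 1 := by
    rw [hQdef, Pm_mul]
    rw [show (eAC : ι ≃ ι).trans eAC = Equiv.refl ι from Equiv.ext fun _ => rfl, Pm_refl]
  have hS2 : S * S = 1 := by
    rw [hSdef, Pm_mul]
    rw [show (eBC : ι ≃ ι).trans eBC = Equiv.refl ι from Equiv.ext fun _ => rfl, Pm_refl]
  have hPQ : P * Q = S := by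
    rw [hPdef, hQdef, hSdef, Pm_mul]
    rw [show (eAB : ι ≃ ι).trans eAC = eBC from Equiv.ext fun _ => rfl]
  have hQP : Q * P = S := by
    rw [hPdef, hQdef, hSdef, Pm_mul]
    rw [show (eAC : ι ≃ ι).trans eAB = eBC from Equiv.ext fun _ => rfl]
  have hPS : P * S = Q := by
    rw [hPdef, hQdef, hSdef, Pm_mul]
    rw [show (eAB : ι ≃ ι).trans eBC = eAC from Equiv.ext fun _ => rfl]
  have hSP : S * P = Q := by
    rw [hPdef, hQdef, hSdef, Pm_mul]
    rw [show (eBC : ι ≃ ι).trans eAB = eAC from Equiv.ext fun _ => rfl]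
  have hQS : Q * S = P := by
    rw [hPdef, hQdef, hSdef, Pm_mul]
    rw [show (eAC : ι ≃ ι).trans eBC = eAB from Equiv.ext fun _ => rfl]
  have hSQ : S * Q = P := by
    rw [hPdef, hQdef, hSdef, Pm_mul]
    rw [show (eBC : ι ≃ ι).trans eAC = eAB from Equiv.ext fun _ => rfl]
  -- T is Hermitian and T * T = 4 T
  have hTH : Tᴴ = T := by
    rw [hTdef]
    simp only [Matrix.conjTranspose_add, Matrix.conjTranspose_sub, Matrix.conjTranspose_one,
      hPdef, hQdef, hSdef, Pm_conjTranspose]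
    rw [show (eAB : ι ≃ ι).symm = eAB from rfl, show (eAC : ι ≃ ι).symm = eAC from rfl,
      show (eBC : ι ≃ ι).symm = eBC from rfl]
  have hT2 : T * T = (4 : ℂ) • T := by
    rw [hTdef]
    simp only [Matrix.sub_mul, Matrix.add_mul, Matrix.mul_sub, Matrix.mul_add,
      Matrix.one_mul, Matrix.mul_one, hP2, hQ2, hS2, hPQ, hQP, hPS, hSP, hQS, hSQ]
    module
  -- positivity of trace (R * (T * T))
  have hpos : 0 ≤ (R * (T * T)).trace := by
    have hpsd : (T * R * Tᴴ).PosSemidef := hR.mul_mul_conjTranspose_same T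
    have := psd_trace_nonneg hpsd
    rwa [hTH, show T * R * T = T * (R * T) from by rw [Matrix.mul_assoc],
      Matrix.trace_mul_comm, Matrix.mul_assoc] at this
  rw [hT2] at hpos
  have hpos' : 0 ≤ (4 : ℂ) * (R * T).trace := by
    rwa [Matrix.mul_smul, Matrix.trace_smul, smul_eq_mul] at hpos
  have hx : 0 ≤ (R * T).trace := by
    rw [Complex.le_def] at hpos' ⊢
    constructor
    · have h1 := hpos'.1
      simp only [Complex.zero_re, Complex.mul_re] at h1 ⊢
      norm_num at h1
      linarith
    · have h2 := hpos'.2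
      simp only [Complex.zero_im, Complex.mul_im] at h2 ⊢
      norm_num at h2
      linarith
  -- compute the trace
  have htrace : (R * T).trace
      = 1 + (rBC ρ ^ 2).trace - (rAB ρ ^ 2).trace - (rAC ρ ^ 2).trace := by
    rw [hTdef]
    rw [Matrix.mul_add, Matrix.mul_sub, Matrix.mul_sub, Matrix.mul_one,
      Matrix.trace_add, Matrix.trace_sub, Matrix.trace_sub]
    rw [hPdef, hQdef, hSdef, trace_mul_Pm, trace_mul_Pm, trace_mul_Pm]
    rw [show (eAB : ι ≃ ι).symm = eAB from rfl, show (eAC : ι ≃ ι).symm = eAC from rfl,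
      show (eBC : ι ≃ ι).symm = eBC from rfl]
    rw [hRdef, sumAB, sumAC, sumBC, Matrix.trace_kronecker, htr]
    ring
  rw [← htrace]
  exact hx
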